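/- Soundness of the leads-to operator: let A be a GOAL agent and define the relation ↦ on mental state formulas (relative to S_A) as the least relation such that (a) φ ↦ ψ whenever S_A ⊨ φ ensures ψ, (b) φ ↦ ψ whenever φ ↦ χ and χ ↦ ψ for some χ, and (c) (φ₁ ∨ ⋯ ∨ φ_n) ↦ ψ whenever φ_i ↦ ψ for each 1 ≤ i ≤ n. Then for all mental state formulas φ, ψ: φ ↦ ψ implies S_A ⊨ φ → ◇ψ. -/

import Mathlib

/- Core: propositional language, classical entailment, mental states,
   mental state formulas and their semantics. -/

inductive PForm : Type where
  | atom : Nat → PForm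
  | fals : PForm
  | impl : PForm → PForm → PForm

namespace PForm

def neg (p : PForm) : PForm := p.impl PForm.fals

def conj (p q : PForm) : PForm := (p.impl q.neg).neg

def iffF (p q : PForm) : PForm := (p.impl q).conj (q.impl p)

def eval (v : Nat → Bool) : PForm → Bool
  | atom n => v n
  | fals => false
  | impl p q => !(p.eval v) || q.eval v

end PForm

/-- Classical semantic entailment `Γ ⊨_C φ`. -/
def CEntails (Γ : Set PForm) (φ : PForm) : Prop :=
  ∀ v : Nat → Bool, (∀ ψ ∈ Γ, ψ.eval v = true) → φ.eval v = true

/-- `⊨_C φ`. -/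
def Taut (φ : PForm) : Prop := CEntails ∅ φ

/-- A pair ⟨Σ,Γ⟩ of a belief base and a goal base. -/
structure MState : Type where
  bel : Set PForm
  goals : Set PForm

/-- The conditions making a pair ⟨Σ,Γ⟩ a mental state. -/
def IsMState (m : MState) : Prop :=
  ¬ CEntails m.bel PForm.fals ∧
  ∀ γ ∈ m.goals,
    (¬ CEntails m.bel γ ∧ ¬ Taut γ.neg) ∧
    ∀ γ' : PForm, Taut (γ.impl γ') → ¬ CEntails m.bel γ' → ¬ Taut γ'.neg →
      γ' ∈ m.goals

/-- Mental state formulas: Boolean combinations of atoms `B φ` and `G φ`. -/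
inductive MForm : Type where
  | B : PForm → MForm
  | G : PForm → MForm
  | fals : MForm
  | impl : MForm → MForm → MForm

namespace MForm

def neg (χ : MForm) : MForm := χ.impl MForm.fals
def conj (a b : MForm) : MForm := (a.impl b.neg).neg
def disj (a b : MForm) : MForm := a.neg.impl b
def iffF (a b : MForm) : MForm := (a.impl b).conj (b.impl a)

end MForm

/-- Truth of a mental state formula in a mental state: `⟨Σ,Γ⟩ ⊨_M χ`. -/
def MSat (m : MState) : MForm → Prop
  | .B φ => CEntails m.bel φ
  | .G φ => φ ∈ m.goals
  | .fals => False
  | .impl a b => MSat m a → MSat m b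

/-- `⊨_M χ`: truth in every mental state. -/
def MValid (χ : MForm) : Prop := ∀ m : MState, IsMState m → MSat m χ

/- Capabilities, the mental state transformer M, agents and traces. -/

/-- Capabilities: belief-update capabilities, adopt and drop. -/
inductive Cap (β : Type) : Type where
  | bcap : β → Cap β
  | adopt : PForm → Cap β
  | drop : PForm → Cap β

/- The partial mental state transformer M, given a partial belief-update
function `T` on the belief capabilities. -/
open Classical in
noncomputable def MTrans {β : Type} (T : β → Set PForm → Option (Set PForm)) :
    Cap β → MState → Option MState
  | .bcap a, m =>
      (T a m.bel).map (fun S' => MState.mk S' {ψ ∈ m.goals | ¬ CEntails S' ψ})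
  | .drop φ, m => some (MState.mk m.bel {ψ ∈ m.goals | ¬ CEntails {ψ} φ})
  | .adopt φ, m =>
      if ¬ Taut φ.neg ∧ ¬ CEntails m.bel φ then
        some (MState.mk m.bel
          (m.goals ∪ {φ' : PForm | ¬ CEntails m.bel φ' ∧ Taut (φ.impl φ')}))
      else none

/-- Definedness of `T` at `(a,Σ)` depends only on `a`. -/
def TDepOnlyAct {β : Type} (T : β → Set PForm → Option (Set PForm)) : Prop :=
  ∀ (a : β) (S1 S2 : Set PForm), (T a S1).isSome → (T a S2).isSome

/-- A conditional action `ψ → do(a)`. -/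
structure CondAct (β : Type) : Type where
  cond : MForm
  act : Cap β

/-- A GOAL agent ⟨Π, Σ₀, Γ₀⟩. -/
structure Agent (β : Type) : Type where
  prog : Set (CondAct β)
  prog_nonempty : prog.Nonempty
  init : MState
  init_ms : IsMState init

/-- The computation step `m →_b m'`. -/
def StepRel {β : Type} (T : β → Set PForm → Option (Set PForm))
    (b : CondAct β) (m m' : MState) : Prop :=
  MSat m b.cond ∧ MTrans T b.act m = some m'

/-- A conditional action is enabled in `m` iff a computation step exists. -/
def EnabledC {β : Type} (T : β → Set PForm → Option (Set PForm))
    (b : CondAct β) (m : MState) : Prop :=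
  ∃ m', StepRel T b m m'

/-- A fair trace of the agent `A` starting in its initial mental state
(an element of S_A). -/
structure ATrace {β : Type} (T : β → Set PForm → Option (Set PForm))
    (A : Agent β) : Type where
  st : Nat → MState
  act : Nat → CondAct β
  st_ms : ∀ i, IsMState (st i)
  act_mem : ∀ i, act i ∈ A.prog
  step : ∀ i, StepRel T (act i) (st i) (st (i+1)) ∨
      (¬ EnabledC T (act i) (st i) ∧ st (i+1) = st i)
  fair : ∀ b ∈ A.prog, ∀ n : Nat, ∃ i, n ≤ i ∧ act i = b
  start : st 0 = A.init

/-- The trace-based Hoare triple `{φ} b {ψ}` for a conditional action `b`,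
relative to the set S_A of fair traces of the agent `A`. -/
def THoare {β : Type} (T : β → Set PForm → Option (Set PForm)) (A : Agent β)
    (φ : MForm) (b : CondAct β) (ψ : MForm) : Prop :=
  ∀ (s : ATrace T A) (i : Nat),
    MSat (s.st i) φ → s.act i = b → MSat (s.st (i+1)) ψ

/- Temporal formulas over mental state formulas and their semantics on
traces. -/

/-- Temporal formulas: mental state formulas closed under Boolean
connectives and weak until. -/
inductive TForm : Type where
  | mf : MForm → TForm
  | fals : TForm
  | impl : TForm → TForm → TForm
  | untl : TForm → TForm → TForm

namespace TForm

def neg (a : TForm) : TForm := a.impl TForm.fals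
def conj (a b : TForm) : TForm := (a.impl b.neg).neg
def box (a : TForm) : TForm := a.untl TForm.fals
def diam (a : TForm) : TForm := (a.neg.box).neg
def unlessF (a b : TForm) : TForm := a.impl (a.untl b)
def ensuresF (a b : TForm) : TForm := (a.unlessF b).conj (a.impl b.diam)

end TForm

/-- `s,i ⊨ χ` for a trace `s`. -/
def TSat {β : Type} {T : β → Set PForm → Option (Set PForm)} {A : Agent β}
    (s : ATrace T A) : TForm → Nat → Prop
  | .mf χ, i => MSat (s.st i) χ
  | .fals, _ => False
  | .impl a b, i => TSat s a i → TSat s b i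
  | .untl a b, i =>
      (∃ j, i ≤ j ∧ TSat s b j ∧ ∀ k, i ≤ k → k < j → TSat s a k) ∨
      (∀ k, i ≤ k → TSat s a k)

/-- `S_A ⊨ χ`. -/
def SASat {β : Type} (T : β → Set PForm → Option (Set PForm)) (A : Agent β)
    (χ : TForm) : Prop :=
  ∀ (s : ATrace T A) (i : Nat), TSat s χ i

/-- Iterated disjunction `φ₁ ∨ ⋯ ∨ φ_n` of a nonempty list of mental state
formulas. -/
def bigOr : MForm → List MForm → MForm
  | φ, [] => φ
  | φ, χ :: l => φ.disj (bigOr χ l)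

/-- The leads-to relation ↦ relative to the traces of the agent `A`: the
least relation closed under (a) ensures, (b) transitivity and
(c) disjunction. -/
inductive LeadsTo {β : Type} (T : β → Set PForm → Option (Set PForm))
    (A : Agent β) : MForm → MForm → Prop where
  | ensures {φ ψ : MForm} :
      SASat T A ((TForm.mf φ).ensuresF (TForm.mf ψ)) → LeadsTo T A φ ψ
  | trans {φ χ ψ : MForm} :
      LeadsTo T A φ χ → LeadsTo T A χ ψ → LeadsTo T A φ ψ
  | disj {φ : MForm} {l : List MForm} {ψ : MForm} :
      LeadsTo T A φ ψ → (∀ χ ∈ l, LeadsTo T A χ ψ) →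
      LeadsTo T A (bigOr φ l) ψ

lemma diam_iff {β : Type} {T : β → Set PForm → Option (Set PForm)}
    {A : Agent β} (s : ATrace T A) (ψ : MForm) (i : Nat) :
    TSat s ((TForm.mf ψ).diam) i ↔ ∃ j, i ≤ j ∧ MSat (s.st j) ψ := by
  simp only [TForm.diam, TForm.box, TForm.neg, TSat]
  constructor
  · intro h
    by_contra hc
    push_neg at hc
    exact h (Or.inr (fun k hk hsk => hc k hk hsk))
  · rintro ⟨j, hj, hψ⟩ h
    rcases h with ⟨k, _, hf, _⟩ | h
    · exact hf
    · exact h j hj hψ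

lemma msat_bigOr {m : MState} {φ : MForm} {l : List MForm}
    (h : MSat m (bigOr φ l)) : MSat m φ ∨ ∃ χ ∈ l, MSat m χ := by
  induction l generalizing φ with
  | nil => exact Or.inl h
  | cons χ l ih =>
    simp only [bigOr, MForm.disj, MForm.neg, MSat] at h
    by_cases hφ : MSat m φ
    · exact Or.inl hφ
    · rcases ih (h hφ) with h' | ⟨χ', hχ', h'⟩
      · exact Or.inr ⟨χ, List.mem_cons_self, h'⟩
      · exact Or.inr ⟨χ', List.mem_cons_of_mem _ hχ', h'⟩

/-- Soundness of the leads-to operator. -/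
theorem leadsto_sound (β : Type)
    (T : β → Set PForm → Option (Set PForm)) (hT : TDepOnlyAct T)
    (A : Agent β) :
    ∀ φ ψ : MForm, LeadsTo T A φ ψ →
      SASat T A ((TForm.mf φ).impl (TForm.mf ψ).diam) := by
  intro φ ψ h
  induction h with
  | @ensures φ ψ h =>
    intro s i hφ
    have := h s i
    simp only [TForm.ensuresF, TForm.conj, TForm.neg, TSat] at this
    rw [diam_iff]
    by_contra hc
    exact this (fun hunl himp => (himp hφ) (Or.inr (fun k hk hψk => hc ⟨k, hk, hψk⟩)))
  | @trans φ χ ψ h1 h2 ih1 ih2 =>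
    intro s i hφ
    rw [diam_iff]
    rcases (diam_iff s χ i).mp (ih1 s i hφ) with ⟨j, hij, hχ⟩
    rcases (diam_iff s ψ j).mp (ih2 s j hχ) with ⟨k, hjk, hψ⟩
    exact ⟨k, le_trans hij hjk, hψ⟩
  | @disj φ l ψ h1 h2 ih1 ih2 =>
    intro s i hbig
    rcases msat_bigOr hbig with hφ | ⟨χ, hχ, hm⟩
    · exact ih1 s i hφ
    · exact ih2 χ hχ s i hm
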